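/- Let (X, C) be a reflexive U-graph, let (Y, d) be a U-algebra, i.e. d : Ultrafilter Y → Y satisfies d (pure y) = y for all y and d (Ultrafilter.map d 𝔜) = d (Ultrafilter.bind 𝔜 id) for all 𝔜, and let f : X → Y be a map. Writing f♯ := d ∘ Ultrafilter.map f : Ultrafilter X → Y, the following are equivalent: (i) f is monotone from (X, C) to the graph of d, i.e. C 𝔵 x implies f♯ 𝔵 = f x; (ii) for all 𝔵, 𝔷 : Ultrafilter X and x ∈ X, if C 𝔵 x and C 𝔷 x then f♯ 𝔵 = f♯ 𝔷. -/
import Mathlib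

universe u

theorem stmt5 {X Y : Type u} (C : Ultrafilter X → X → Prop)
    (hrefl : ∀ x : X, C (pure x) x)
    (d : Ultrafilter Y → Y)
    (hd1 : ∀ y : Y, d (pure y) = y)
    (hd2 : ∀ 𝔜 : Ultrafilter (Ultrafilter Y),
      d (Ultrafilter.map d 𝔜) = d (Ultrafilter.bind 𝔜 id))
    (f : X → Y) :
    (∀ (𝔵 : Ultrafilter X) (x : X), C 𝔵 x → d (Ultrafilter.map f 𝔵) = f x) ↔
    (∀ (𝔵 𝔷 : Ultrafilter X) (x : X), C 𝔵 x → C 𝔷 x →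
      d (Ultrafilter.map f 𝔵) = d (Ultrafilter.map f 𝔷)) := by
  constructor
  · intro h 𝔵 𝔷 x h1 h2
    rw [h 𝔵 x h1, h 𝔷 x h2]
  · intro h 𝔵 x h1
    have := h 𝔵 (pure x) x h1 (hrefl x)
    simpa [Ultrafilter.map_pure, hd1] using this
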